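/- Let V be a real Hilbert space and f : V → ℝ bounded, uniformly continuous, semiconvex with constant C (i.e., x ↦ f(x) + (C/2)‖x‖² convex) and semiconcave with constant C (i.e., x ↦ f(x) − (C/2)‖x‖² concave). Then f is Fréchet differentiable and its derivative Df : V → V is Lipschitz continuous with Lipschitz constant at most C. -/

import Mathlib

open RealInnerProductSpace


/-- Existence of a subgradient for a continuous convex function on a real Hilbert space. -/
theorem exists_subgradient_aux7
    {V : Type*} [NormedAddCommGroup V] [InnerProductSpace ℝ V] [CompleteSpace V]
    (g : V → ℝ) (hg : ConvexOn ℝ Set.univ g) (hc : Continuous g) (x : V) :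
    ∃ q : V, ∀ y : V, g x + ⟪q, y - x⟫ ≤ g y := by
  set S : Set (V × ℝ) := {p | g p.1 < p.2} with hS
  have hSconv : Convex ℝ S := by
    rintro ⟨y₁, t₁⟩ h₁ ⟨y₂, t₂⟩ h₂ a b ha hb hab
    simp only [hS, Set.mem_setOf_eq] at h₁ h₂ ⊢
    calc g (a • y₁ + b • y₂) ≤ a * g y₁ + b * g y₂ :=
          hg.2 (Set.mem_univ _) (Set.mem_univ _) ha hb hab
      _ < a * t₁ + b * t₂ := by
          rcases ha.lt_or_eq with ha' | ha'
          · have := mul_lt_mul_of_pos_left h₁ ha'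
            have := mul_le_mul_of_nonneg_left h₂.le hb
            linarith
          · have hb' : 0 < b := by rw [← ha'] at hab; linarith
            have := mul_lt_mul_of_pos_left h₂ hb'
            have := mul_le_mul_of_nonneg_left h₁.le ha
            linarith
  have hSopen : IsOpen S :=
    isOpen_lt (hc.comp continuous_fst) continuous_snd
  have hxS : (x, g x) ∉ S := by simp [hS]
  obtain ⟨ℓ, hℓ⟩ := geometric_hahn_banach_open_point hSconv hSopen hxS
  -- decompose ℓ
  have hdecomp : ∀ (y : V) (t : ℝ), ℓ (y, t) = ℓ (y, 0) + t * ℓ (0, 1) := by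
    intro y t
    have : (y, t) = (y, (0:ℝ)) + t • ((0:V), (1:ℝ)) := by
      simp [Prod.ext_iff]
    rw [this, map_add, map_smul]; ring_nf
  set a : ℝ := ℓ (0, 1) with ha
  have haneg : a < 0 := by
    have h1 := hℓ (x, g x + 1) (by simp [hS])
    rw [hdecomp x (g x + 1), hdecomp x (g x)] at h1
    nlinarith
  have hkey : ∀ y : V, ℓ (y, 0) + g y * a ≤ ℓ (x, 0) + g x * a := by
    intro y
    have h2 : ∀ ε : ℝ, 0 < ε → ℓ (y, 0) + (g y + ε) * a < ℓ (x, 0) + g x * a := by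
      intro ε hε
      have := hℓ (y, g y + ε) (by simp [hS, hε])
      rwa [hdecomp y (g y + ε), hdecomp x (g x)] at this
    by_contra hcon
    push_neg at hcon
    set δ := (ℓ (y, 0) + g y * a) - (ℓ (x, 0) + g x * a) with hδ
    have hδpos : 0 < δ := by linarith
    have hna : 0 < -a := by linarith
    have := h2 (δ / (2 * (-a))) (by positivity)
    have ha0 : a ≠ 0 := ne_of_lt haneg
    have hh : (δ / (2 * (-a))) * a = -δ / 2 := by
      field_simp
    nlinarith [this, hh]
  -- Riesz representation of v ↦ ℓ (v, 0) / (-a)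
  set φ : V →L[ℝ] ℝ := (-a)⁻¹ • (ℓ.comp (ContinuousLinearMap.inl ℝ V ℝ)) with hφ
  refine ⟨(InnerProductSpace.toDual ℝ V).symm φ, fun y => ?_⟩
  have hφy : ∀ v : V, ⟪(InnerProductSpace.toDual ℝ V).symm φ, v⟫ = (-a)⁻¹ * ℓ (v, 0) := by
    intro v
    rw [InnerProductSpace.toDual_symm_apply]
    simp [hφ]
  have h3 := hkey y
  have h4 : ⟪(InnerProductSpace.toDual ℝ V).symm φ, y - x⟫
      = (-a)⁻¹ * (ℓ (y, 0) - ℓ (x, 0)) := by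
    rw [hφy (y - x)]
    have : (y - x, (0:ℝ)) = (y, (0:ℝ)) - (x, 0) := by simp [Prod.ext_iff]
    rw [this, map_sub]
  rw [h4]
  have hna : 0 < -a := by linarith
  have h5 : ℓ (y, 0) - ℓ (x, 0) ≤ (g x - g y) * a := by nlinarith
  have h6 : (-a)⁻¹ * (ℓ (y, 0) - ℓ (x, 0)) ≤ (-a)⁻¹ * ((g x - g y) * a) :=
    mul_le_mul_of_nonneg_left h5 (le_of_lt (inv_pos.2 hna))
  have h7 : (-a)⁻¹ * ((g x - g y) * a) = g y - g x := by
    field_simp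
    have ha0 : a ≠ 0 := ne_of_lt haneg
    rw [mul_div_cancel_left₀ _ ha0]
    ring
  linarith

/-- Let `V` be a real Hilbert space and `f : V → ℝ` bounded, uniformly
continuous, semiconvex with constant `C` (i.e. `x ↦ f(x) + (C/2)‖x‖²` is convex) and
semiconcave with constant `C` (i.e. `x ↦ f(x) − (C/2)‖x‖²` is concave). Then `f` is Fréchet
differentiable and its gradient `Df : V → V` is Lipschitz continuous with constant at most
`C`. -/
theorem statement_7
    {V : Type*} [NormedAddCommGroup V] [InnerProductSpace ℝ V] [CompleteSpace V]
    (f : V → ℝ) (C : ℝ) (hC : 0 ≤ C)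
    (hbdd : ∃ M : ℝ, ∀ x : V, |f x| ≤ M)
    (hucont : UniformContinuous f)
    (hsemiconvex : ConvexOn ℝ Set.univ (fun x : V => f x + (C / 2) * ‖x‖ ^ 2))
    (hsemiconcave : ConcaveOn ℝ Set.univ (fun x : V => f x - (C / 2) * ‖x‖ ^ 2)) :
    ∃ Df : V → V, (∀ x : V, HasGradientAt f (Df x) x) ∧
      LipschitzWith (Real.toNNReal C) Df := by
  have hcont : Continuous f := hucont.continuous
  have hnormsq : Continuous fun y : V => (C / 2) * ‖y‖ ^ 2 :=
    continuous_const.mul (continuous_norm.pow 2)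
  -- expansion identity
  have hsq : ∀ x z : V, ‖z‖ ^ 2 = ‖x‖ ^ 2 + 2 * ⟪x, z - x⟫ + ‖z - x‖ ^ 2 := by
    intro x z
    have h := norm_add_sq_real x (z - x)
    rw [add_sub_cancel] at h
    linarith
  -- key sandwich property
  have key : ∀ x : V, ∃ p : V, ∀ y : V,
      f x + ⟪p, y - x⟫ - C / 2 * ‖y - x‖ ^ 2 ≤ f y ∧
      f y ≤ f x + ⟪p, y - x⟫ + C / 2 * ‖y - x‖ ^ 2 := by
    intro x
    obtain ⟨q₁, hq₁⟩ := exists_subgradient_aux7 (fun y : V => f y + (C / 2) * ‖y‖ ^ 2)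
      hsemiconvex (hcont.add hnormsq) x
    obtain ⟨q₂, hq₂⟩ := exists_subgradient_aux7 (fun y : V => -(f y - (C / 2) * ‖y‖ ^ 2))
      hsemiconcave.neg (((hcont.sub hnormsq)).neg) x
    set p₁ : V := q₁ - C • x with hp₁def
    set p₂ : V := C • x - q₂ with hp₂def
    have hinner₁ : ∀ y : V, ⟪p₁, y - x⟫ = ⟪q₁, y - x⟫ - C * ⟪x, y - x⟫ := by
      intro y; rw [hp₁def, inner_sub_left, real_inner_smul_left]
    have hinner₂ : ∀ y : V, ⟪p₂, y - x⟫ = C * ⟪x, y - x⟫ - ⟪q₂, y - x⟫ := by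
      intro y; rw [hp₂def, inner_sub_left, real_inner_smul_left]
    have hlow : ∀ y : V, f x + ⟪p₁, y - x⟫ - C / 2 * ‖y - x‖ ^ 2 ≤ f y := by
      intro y
      have h := hq₁ y
      rw [hsq x y] at h
      rw [hinner₁ y]
      linarith
    have hup : ∀ y : V, f y ≤ f x + ⟪p₂, y - x⟫ + C / 2 * ‖y - x‖ ^ 2 := by
      intro y
      have h := hq₂ y
      rw [hsq x y] at h
      rw [hinner₂ y]
      linarith
    -- p₁ = p₂
    have heq : p₁ = p₂ := by
      set v : V := p₁ - p₂ with hvdef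
      have hv : ∀ y : V, ⟪v, y - x⟫ ≤ C * ‖y - x‖ ^ 2 := by
        intro y
        have h1 := hlow y
        have h2 := hup y
        rw [hvdef, inner_sub_left]
        linarith
      set t : ℝ := 1 / (2 * (C + 1)) with htdef
      have htpos : 0 < t := by rw [htdef]; positivity
      have h3 := hv (x + t • v)
      rw [add_sub_cancel_left] at h3
      rw [real_inner_smul_right, real_inner_self_eq_norm_sq] at h3
      rw [norm_smul, Real.norm_eq_abs, abs_of_pos htpos, mul_pow] at h3
      have hCt : C * t ≤ 1 / 2 := by
        rw [htdef, mul_one_div, div_le_iff₀ (by positivity : (0:ℝ) < 2 * (C + 1))]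
        nlinarith
      have hnn : 0 ≤ t * ‖v‖ ^ 2 := by positivity
      have h5 : C * t * (t * ‖v‖ ^ 2) ≤ 1 / 2 * (t * ‖v‖ ^ 2) :=
        mul_le_mul_of_nonneg_right hCt hnn
      have hvnorm : ‖v‖ ^ 2 ≤ 0 := by nlinarith [sq_nonneg ‖v‖, h3, h5, htpos]
      have : ‖v‖ = 0 := by nlinarith [norm_nonneg v]
      have : v = 0 := norm_eq_zero.mp this
      rw [hvdef, sub_eq_zero] at this
      exact this
    exact ⟨p₁, fun y => ⟨hlow y, by rw [heq]; exact hup y⟩⟩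
  choose p hp using key
  refine ⟨p, ?_, ?_⟩
  · -- differentiability
    intro x
    rw [hasGradientAt_iff_isLittleO, Asymptotics.isLittleO_iff]
    intro c hc
    have hδpos : 0 < 2 * c / (C + 1) := by positivity
    filter_upwards [Metric.ball_mem_nhds x hδpos] with y hy
    rw [Metric.mem_ball, dist_eq_norm] at hy
    have h1 := (hp x y).1
    have h2 := (hp x y).2
    have habs : |f y - f x - ⟪p x, y - x⟫| ≤ C / 2 * ‖y - x‖ ^ 2 := by
      rw [abs_le]; constructor <;> linarith
    rw [Real.norm_eq_abs]
    have hn : 0 ≤ ‖y - x‖ := norm_nonneg _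
    have hy' : ‖y - x‖ * (C + 1) < 2 * c :=
      (lt_div_iff₀ (by positivity : (0:ℝ) < C + 1)).mp hy
    have hq1 : C * ‖y - x‖ ≤ 2 * c := by nlinarith
    have hq2 : C / 2 * ‖y - x‖ ^ 2 ≤ c * ‖y - x‖ := by nlinarith
    linarith
  · -- Lipschitz bound
    apply LipschitzWith.of_dist_le_mul
    intro x y
    rw [Real.coe_toNNReal C hC, dist_eq_norm, dist_eq_norm]
    rcases eq_or_lt_of_le hC with hC0 | hCpos
    · -- C = 0 : p is constant
      rw [← hC0]
      rw [← hC0] at hp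
      simp only [zero_div, zero_mul, sub_zero, add_zero, zero_smul] at hp
      have hfeq : ∀ a z : V, f z = f a + ⟪p a, z - a⟫ := by
        intro a z
        have h1 := (hp a z).1
        have h2 := (hp a z).2
        linarith
      have hzy : ∀ z : V, ⟪p x - p y, z - y⟫ = 0 := by
        intro z
        have e1 := hfeq x z
        have e2 := hfeq y z
        have e3 := hfeq x y
        have e4 : ⟪p x, z - x⟫ - ⟪p x, y - x⟫ = ⟪p x, z - y⟫ := by
          rw [← inner_sub_right]
          congr 1
          abel
        rw [inner_sub_left]
        linarith
      have := hzy (y + (p x - p y))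
      rw [add_sub_cancel_left, real_inner_self_eq_norm_sq] at this
      have : p x - p y = 0 := by
        have := pow_eq_zero_iff (n := 2) (by norm_num) |>.mp (by rw [← this])
        exact norm_eq_zero.mp this
      rw [this, norm_zero, zero_mul]
    · -- C > 0 : cocoercivity argument
      set G : V → V := fun w => p w + C • w with hGdef
      set φ : V → ℝ := fun w => f w + C / 2 * ‖w‖ ^ 2 with hφdef
      have hGinner : ∀ a z : V, ⟪G a, z - a⟫ = ⟪p a, z - a⟫ + C * ⟪a, z - a⟫ := by
        intro a z; rw [hGdef]; rw [inner_add_left, real_inner_smul_left]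
      have hlow : ∀ a z : V, φ a + ⟪G a, z - a⟫ ≤ φ z := by
        intro a z
        have h := (hp a z).1
        rw [hφdef]
        simp only
        rw [hGinner a z, hsq a z]
        linarith
      have hup : ∀ a z : V, φ z ≤ φ a + ⟪G a, z - a⟫ + C * ‖z - a‖ ^ 2 := by
        intro a z
        have h := (hp a z).2
        rw [hφdef]
        simp only
        rw [hGinner a z, hsq a z]
        linarith
      set c2 : ℝ := (2 * C)⁻¹ with hc2def
      have hc2pos : 0 < c2 := by rw [hc2def]; positivity
      have hc2C : 2 * C * c2 = 1 := by
        rw [hc2def]; field_simp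
      -- main inequality J
      have J : ∀ a b : V, φ a + ⟪G a, b - a⟫ + c2 / 2 * ‖G b - G a‖ ^ 2 ≤ φ b := by
        intro a b
        set Δ : V := G b - G a with hΔdef
        set z : V := b - c2 • Δ with hzdef
        have h1 := hlow a z
        have h2 := hup b z
        have e1 : ⟪G a, z - a⟫ = ⟪G a, b - a⟫ - c2 * ⟪G a, Δ⟫ := by
          have : z - a = (b - a) - c2 • Δ := by rw [hzdef]; abel
          rw [this, inner_sub_right, real_inner_smul_right]
        have e2 : ⟪G b, z - b⟫ = -(c2 * ⟪G b, Δ⟫) := by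
          have : z - b = -(c2 • Δ) := by rw [hzdef]; abel
          rw [this, inner_neg_right, real_inner_smul_right]
        have e3 : ‖z - b‖ ^ 2 = c2 ^ 2 * ‖Δ‖ ^ 2 := by
          have : z - b = -(c2 • Δ) := by rw [hzdef]; abel
          rw [this, norm_neg, norm_smul, Real.norm_eq_abs, abs_of_pos hc2pos, mul_pow]
        have e4 : ⟪G b, Δ⟫ - ⟪G a, Δ⟫ = ‖Δ‖ ^ 2 := by
          rw [← inner_sub_left, ← hΔdef, real_inner_self_eq_norm_sq]
        rw [e1] at h1
        rw [e2, e3] at h2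
        have hCc2half : C * c2 = 1 / 2 := by linarith [hc2C]
        have hCc2sq : C * (c2 ^ 2 * ‖Δ‖ ^ 2) = c2 / 2 * ‖Δ‖ ^ 2 := by
          calc C * (c2 ^ 2 * ‖Δ‖ ^ 2) = C * c2 * (c2 * ‖Δ‖ ^ 2) := by ring
            _ = 1 / 2 * (c2 * ‖Δ‖ ^ 2) := by rw [hCc2half]
            _ = c2 / 2 * ‖Δ‖ ^ 2 := by ring
        have e4' : c2 * ⟪G b, Δ⟫ - c2 * ⟪G a, Δ⟫ = c2 * ‖Δ‖ ^ 2 := by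
          rw [← mul_sub, e4]
        rw [hCc2sq] at h2
        have h8 : φ a + (⟪G a, b - a⟫ - c2 * ⟪G a, Δ⟫) ≤
            φ b + -(c2 * ⟪G b, Δ⟫) + c2 / 2 * ‖Δ‖ ^ 2 := le_trans h1 h2
        have h9 : c2 * ⟪G b, Δ⟫ = c2 * ⟪G a, Δ⟫ + c2 * ‖Δ‖ ^ 2 := by linarith [e4']
        rw [h9] at h8
        linarith [h8]
      have J1 := J x y
      have J2 := J y x
      rw [norm_sub_rev (G x) (G y)] at J2
      set Δ : V := G y - G x with hΔdef
      set d : V := y - x with hddef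
      have e5 : ⟪G y, x - y⟫ = -⟪G y, d⟫ := by
        have : x - y = -d := by rw [hddef]; abel
        rw [this, inner_neg_right]
      have e6 : ⟪G y, d⟫ - ⟪G x, d⟫ = ⟪Δ, d⟫ := by
        rw [← inner_sub_left]
      have hcoco : ‖Δ‖ ^ 2 ≤ 2 * C * ⟪Δ, d⟫ := by
        have hsum : c2 * ‖Δ‖ ^ 2 ≤ ⟪Δ, d⟫ := by
          rw [e5] at J2
          have hGxd : ⟪G x, y - x⟫ = ⟪G x, d⟫ := by rw [hddef]
          rw [hGxd] at J1
          linarith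
        calc ‖Δ‖ ^ 2 = 2 * C * (c2 * ‖Δ‖ ^ 2) := by
              rw [← mul_assoc, hc2C, one_mul]
          _ ≤ 2 * C * ⟪Δ, d⟫ := by
              apply mul_le_mul_of_nonneg_left hsum (by positivity)
      -- conclude Lipschitz
      have hpd : p x - p y = -(Δ - C • d) := by
        rw [hΔdef, hddef, hGdef, smul_sub]
        simp only
        abel
      have hexp : ‖p x - p y‖ ^ 2 = ‖Δ‖ ^ 2 - 2 * (C * ⟪Δ, d⟫) + C ^ 2 * ‖d‖ ^ 2 := by
        rw [hpd, norm_neg]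
        rw [norm_sub_sq_real, real_inner_smul_right, norm_smul, Real.norm_eq_abs,
          abs_of_pos hCpos, mul_pow]
      have hfin : ‖p x - p y‖ ^ 2 ≤ (C * ‖d‖) ^ 2 := by
        rw [hexp]
        nlinarith [hcoco]
      have h8 : ‖p x - p y‖ ≤ C * ‖d‖ := by
        have h9 := Real.sqrt_le_sqrt hfin
        rwa [Real.sqrt_sq (norm_nonneg _), Real.sqrt_sq (by positivity)] at h9
      rw [hddef, norm_sub_rev y x] at h8
      exact h8
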